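/- Consider an object-oriented FMDP with independent transitions whose transition kernel T satisfies causation symmetry. Let O_a, O_b be instances of a common class with field U, and let O_i be an object with i ≠ a and i ≠ b, with state field V. Let p be a full-support joint probability mass function on (S, A, S') consistent with T, and let q be the joint probability mass function whose current-step marginal is q(current = w) := p(current = σ_{ab}(w)) and which is consistent with the same transition kernel T. If the conditional independence O_a.U ⊥_p O_i.V' | ((S, A) \ {O_a.U}) holds, then O_b.U ⊥_q O_i.V' | ((S, A) \ {O_b.U}) holds. -/

import Mathlib

open Finset

noncomputable section

/-- Marginal probability that a configuration agrees with `x` on the coordinates in `E`. -/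
def marg {V : Type*} [Fintype V] [DecidableEq V] {val : V → Type*}
    [∀ v, Fintype (val v)] [∀ v, DecidableEq (val v)]
    (p : (∀ v, val v) → ℝ) (E : Finset V) (x : ∀ v, val v) : ℝ :=
  ∑ y : ∀ v, val v, if ∀ v ∈ E, y v = x v then p y else 0

/-- Conditional probability of the value of coordinate `v` given the values of `P`. -/
def condP {V : Type*} [Fintype V] [DecidableEq V] {val : V → Type*}
    [∀ v, Fintype (val v)] [∀ v, DecidableEq (val v)]
    (p : (∀ v, val v) → ℝ) (v : V) (P : Finset V) (x : ∀ v, val v) : ℝ :=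
  marg p (insert v P) x / marg p P x

/-- Conditional independence X ⊥ Y | Z, in cross-multiplied form. -/
def CondIndep {V : Type*} [Fintype V] [DecidableEq V] {val : V → Type*}
    [∀ v, Fintype (val v)] [∀ v, DecidableEq (val v)]
    (p : (∀ v, val v) → ℝ) (X Y Z : Finset V) : Prop :=
  ∀ x : ∀ v, val v,
    marg p (X ∪ Y ∪ Z) x * marg p Z x = marg p (X ∪ Z) x * marg p (Y ∪ Z) x

/-- Variables of an FMDP: states, actions, next states. -/
abbrev FVar (ns na : ℕ) := Fin ns ⊕ (Fin na ⊕ Fin ns)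

/-- Value types of FMDP variables. -/
def fv {ns na : ℕ} (Sv : Fin ns → Type) (Av : Fin na → Type) : FVar ns na → Type :=
  Sum.elim Sv (Sum.elim Av Sv)

instance {ns na : ℕ} (Sv : Fin ns → Type) (Av : Fin na → Type)
    [∀ i, Fintype (Sv i)] [∀ j, Fintype (Av j)] : ∀ v, Fintype (fv Sv Av v)
  | .inl i => inferInstanceAs (Fintype (Sv i))
  | .inr (.inl j) => inferInstanceAs (Fintype (Av j))
  | .inr (.inr k) => inferInstanceAs (Fintype (Sv k))

instance {ns na : ℕ} (Sv : Fin ns → Type) (Av : Fin na → Type)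
    [∀ i, DecidableEq (Sv i)] [∀ j, DecidableEq (Av j)] : ∀ v, DecidableEq (fv Sv Av v)
  | .inl i => inferInstanceAs (DecidableEq (Sv i))
  | .inr (.inl j) => inferInstanceAs (DecidableEq (Av j))
  | .inr (.inr k) => inferInstanceAs (DecidableEq (Sv k))

/-- The set of current-step coordinates. -/
def curSet (ns na : ℕ) : Finset (FVar ns na) :=
  (Finset.univ.image (Sum.inl : Fin ns → FVar ns na)) ∪
    (Finset.univ.image (fun j : Fin na => (Sum.inr (Sum.inl j) : FVar ns na)))

/-- A joint pmf `p` on (S, A, S') is consistent with the transition kernel `T`. -/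
def FConsistent {ns na : ℕ} {Sv : Fin ns → Type} {Av : Fin na → Type}
    [∀ i, Fintype (Sv i)] [∀ j, Fintype (Av j)]
    [∀ i, DecidableEq (Sv i)] [∀ j, DecidableEq (Av j)]
    (p : (∀ v, fv Sv Av v) → ℝ)
    (T : (∀ i, Sv i) → (∀ j, Av j) → (∀ k, Sv k) → ℝ) : Prop :=
  ∀ x, p x = marg p (curSet ns na) x *
    T (fun i => x (.inl i)) (fun j => x (.inr (.inl j))) (fun k => x (.inr (.inr k)))

/-- The specification of an object-oriented FMDP: `K` classes, class `k` having `Nk k`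
instances, state fields `SF k` and action fields `AF k`, with finite nonempty value types. -/
structure OOSpec where
  K : ℕ
  Nk : Fin K → ℕ
  SF : Fin K → Type
  AF : Fin K → Type
  SVal : ∀ k, SF k → Type
  AVal : ∀ k, AF k → Type
  finSF : ∀ k, Fintype (SF k)
  finAF : ∀ k, Fintype (AF k)
  deqSF : ∀ k, DecidableEq (SF k)
  deqAF : ∀ k, DecidableEq (AF k)
  finSVal : ∀ k u, Fintype (SVal k u)
  finAVal : ∀ k v, Fintype (AVal k v)
  deqSVal : ∀ k u, DecidableEq (SVal k u)
  deqAVal : ∀ k v, DecidableEq (AVal k v)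
  neSVal : ∀ k u, Nonempty (SVal k u)
  neAVal : ∀ k v, Nonempty (AVal k v)

attribute [instance] OOSpec.finSF OOSpec.finAF OOSpec.deqSF OOSpec.deqAF
  OOSpec.finSVal OOSpec.finAVal OOSpec.deqSVal OOSpec.deqAVal
  OOSpec.neSVal OOSpec.neAVal

namespace OOSpec

variable (σ : OOSpec)

/-- Objects: the `m`-th instance of class `k`. -/
abbrev ObjIdx := Σ k : Fin σ.K, Fin (σ.Nk k)

/-- The fields of class `k`: state fields and action fields. -/
abbrev Fd (k : Fin σ.K) := σ.SF k ⊕ σ.AF k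

/-- Value type of each field of class `k`. -/
def fval (k : Fin σ.K) : σ.Fd k → Type := Sum.elim (σ.SVal k) (σ.AVal k)

instance (k : Fin σ.K) : ∀ f : σ.Fd k, Fintype (σ.fval k f)
  | .inl u => inferInstanceAs (Fintype (σ.SVal k u))
  | .inr v => inferInstanceAs (Fintype (σ.AVal k v))

instance (k : Fin σ.K) : ∀ f : σ.Fd k, DecidableEq (σ.fval k f)
  | .inl u => inferInstanceAs (DecidableEq (σ.SVal k u))
  | .inr v => inferInstanceAs (DecidableEq (σ.AVal k v))

/-- The attribute tuple of an instance of class `k`. -/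
abbrev Obj (k : Fin σ.K) := ∀ f : σ.Fd k, σ.fval k f

/-- Current configurations: an attribute tuple for every object. -/
abbrev Cur := ∀ o : σ.ObjIdx, σ.Obj o.1

/-- Next-step configurations: values of all next-step state attributes. -/
abbrev Nxt := ∀ o : σ.ObjIdx, ∀ u : σ.SF o.1, σ.SVal o.1 u

theorem fst_swap (a b o : σ.ObjIdx) (h : a.1 = b.1) :
    (Equiv.swap a b o).1 = o.1 := by
  rcases eq_or_ne o a with rfl | ha
  · rw [Equiv.swap_apply_left]; exact h.symm
  · rcases eq_or_ne o b with rfl | hb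
    · rw [Equiv.swap_apply_right]; exact h
    · rw [Equiv.swap_apply_of_ne_of_ne ha hb]

/-- The involution σ_{ab} on current configurations exchanging the attribute tuples of
two instances `a` and `b` of a common class. -/
def swapCur (a b : σ.ObjIdx) (h : a.1 = b.1) (w : σ.Cur) : σ.Cur :=
  fun o => cast (congrArg σ.Obj (σ.fst_swap a b o h)) (w (Equiv.swap a b o))

/-- The conditional law, under `T`, of object `o`'s next-step state attributes at `w`. -/
def objLaw (T : σ.Cur → σ.Nxt → ℝ) (o : σ.ObjIdx) (w : σ.Cur)
    (y : ∀ u : σ.SF o.1, σ.SVal o.1 u) : ℝ :=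
  ∑ x' : σ.Nxt, if x' o = y then T w x' else 0

/-- The marginal of `T(· | w)` on the single next-step coordinate `O_o.u'`
(the coordinate kernel `T_{o,u}`). -/
def coordKer (T : σ.Cur → σ.Nxt → ℝ) (o : σ.ObjIdx) (u : σ.SF o.1) (w : σ.Cur)
    (y : σ.SVal o.1 u) : ℝ :=
  ∑ x' : σ.Nxt, if x' o u = y then T w x' else 0

/-- `T` has independent transitions: it factorizes over the next-step coordinates as the
product of its coordinate kernels. -/
def IndepTrans (T : σ.Cur → σ.Nxt → ℝ) : Prop :=
  ∀ (w : σ.Cur) (x' : σ.Nxt),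
    T w x' = ∏ ou : Σ o : σ.ObjIdx, σ.SF o.1, σ.coordKer T ou.1 ou.2 w (x' ou.1 ou.2)

/-- A function of the current configuration depends on the current-step coordinate
`O_j.f`: it takes different values at two configurations differing only in that coordinate. -/
def DependsOn {α : Type*} (κ : σ.Cur → α) (j : σ.ObjIdx) (f : σ.Fd j.1) : Prop :=
  ∃ w w' : σ.Cur,
    (∀ (o : σ.ObjIdx) (g : σ.Fd o.1),
      (⟨o, g⟩ : Σ o : σ.ObjIdx, σ.Fd o.1) ≠ ⟨j, f⟩ → w o g = w' o g) ∧ κ w ≠ κ w'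

/-- Result symmetry: instances of a common class transit by the same rule. -/
def ResultSym (T : σ.Cur → σ.Nxt → ℝ) : Prop :=
  ∀ (k : Fin σ.K) (m m' : Fin (σ.Nk k)) (w : σ.Cur) (y : ∀ u : σ.SF k, σ.SVal k u),
    σ.objLaw T ⟨k, m⟩ w y = σ.objLaw T ⟨k, m'⟩ (σ.swapCur ⟨k, m⟩ ⟨k, m'⟩ rfl w) y

/-- Causation symmetry: two other instances of a common class are interchangeable for the
transition of any object. -/
def CausSym (T : σ.Cur → σ.Nxt → ℝ) : Prop :=
  ∀ (i : σ.ObjIdx) (k : Fin σ.K) (m m' : Fin (σ.Nk k)),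
    (⟨k, m⟩ : σ.ObjIdx) ≠ i → (⟨k, m'⟩ : σ.ObjIdx) ≠ i →
    ∀ (w : σ.Cur) (y : ∀ u : σ.SF i.1, σ.SVal i.1 u),
      σ.objLaw T i w y = σ.objLaw T i (σ.swapCur ⟨k, m⟩ ⟨k, m'⟩ rfl w) y

end OOSpec

namespace OOSpec

variable (σ : OOSpec)

/-- Current-step coordinates: the attribute `O_o.f`. -/
abbrev CurV := Σ o : σ.ObjIdx, σ.Fd o.1

/-- Next-step coordinates: the attribute `O_o.u'`. -/
abbrev NxtV := Σ o : σ.ObjIdx, σ.SF o.1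

/-- All variables of the OO-FMDP. -/
abbrev Var := σ.CurV ⊕ σ.NxtV

/-- Value type of each variable. -/
def vval : σ.Var → Type
  | .inl v => σ.fval v.1.1 v.2
  | .inr v => σ.SVal v.1.1 v.2

instance : ∀ v : σ.Var, Fintype (σ.vval v)
  | .inl v => inferInstanceAs (Fintype (σ.fval v.1.1 v.2))
  | .inr v => inferInstanceAs (Fintype (σ.SVal v.1.1 v.2))

instance : ∀ v : σ.Var, DecidableEq (σ.vval v)
  | .inl v => inferInstanceAs (DecidableEq (σ.fval v.1.1 v.2))
  | .inr v => inferInstanceAs (DecidableEq (σ.SVal v.1.1 v.2))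

/-- Full configurations of all variables. -/
abbrev Cfg := ∀ v : σ.Var, σ.vval v

/-- The current configuration determined by a full configuration. -/
def curOf (d : σ.Cfg) : σ.Cur := fun o f => d (.inl ⟨o, f⟩)

/-- The next-step configuration determined by a full configuration. -/
def nxtOf (d : σ.Cfg) : σ.Nxt := fun o u => d (.inr ⟨o, u⟩)

/-- Building a full configuration from a current and a next configuration. -/
def mkCfg (w : σ.Cur) (x' : σ.Nxt) : σ.Cfg
  | .inl v => w v.1 v.2
  | .inr v => x' v.1 v.2

/-- The set of all current-step coordinates. -/
def curVars : Finset σ.Var := Finset.univ.image Sum.inl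

/-- A joint pmf on (S, A, S') is consistent with the transition kernel `T`. -/
def Consistent (p : σ.Cfg → ℝ) (T : σ.Cur → σ.Nxt → ℝ) : Prop :=
  ∀ d : σ.Cfg, p d = marg p σ.curVars d * T (σ.curOf d) (σ.nxtOf d)

end OOSpec


section MargLemmas

variable {V : Type*} [Fintype V] [DecidableEq V] {val : V → Type*}
    [∀ v, Fintype (val v)] [∀ v, DecidableEq (val v)]

theorem marg_congr' (p : (∀ v, val v) → ℝ) (E : Finset V) {x x' : ∀ v, val v}
    (h : ∀ v ∈ E, x v = x' v) : marg p E x = marg p E x' := by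
  unfold marg
  refine Finset.sum_congr rfl fun y _ => ?_
  refine if_congr (forall₂_congr fun v hv => ?_) rfl rfl
  rw [h v hv]

theorem marg_pos' {p : (∀ v, val v) → ℝ} (hp : ∀ y, 0 < p y) (E : Finset V)
    (x : ∀ v, val v) : 0 < marg p E x := by
  unfold marg
  refine Finset.sum_pos' (fun y _ => ?_) ⟨x, Finset.mem_univ x, ?_⟩
  · split_ifs
    · exact (hp y).le
    · exact le_rfl
  · simpa using hp x

theorem marg_insert_sum (p : (∀ v, val v) → ℝ) {E : Finset V} {c : V} (hc : c ∉ E)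
    (x : ∀ v, val v) :
    marg p E x = ∑ u : val c, marg p (insert c E) (Function.update x c u) := by
  unfold marg
  rw [Finset.sum_comm]
  refine Finset.sum_congr rfl fun y _ => ?_
  have hcond : ∀ u : val c,
      (∀ v ∈ insert c E, y v = Function.update x c u v) ↔
        (y c = u ∧ ∀ v ∈ E, y v = x v) := by
    intro u
    rw [Finset.forall_mem_insert]
    refine and_congr (by rw [Function.update_self]) (forall₂_congr fun v hv => ?_)
    have hvc : v ≠ c := by rintro rfl; exact hc hv
    rw [Function.update_of_ne hvc]
  simp_rw [hcond]
  symm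
  by_cases hQ : ∀ v ∈ E, y v = x v
  · calc ∑ u : val c, (if y c = u ∧ ∀ v ∈ E, y v = x v then p y else 0)
        = ∑ u : val c, (if y c = u then p y else 0) :=
          Finset.sum_congr rfl fun u _ => if_congr (and_iff_left hQ) rfl rfl
      _ = if ∀ v ∈ E, y v = x v then p y else 0 := by
          rw [Finset.sum_ite_eq Finset.univ (y c) (fun _ => p y), if_pos (Finset.mem_univ _),
            if_pos hQ]
  · calc ∑ u : val c, (if y c = u ∧ ∀ v ∈ E, y v = x v then p y else 0)
        = ∑ u : val c, (0:ℝ) :=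
          Finset.sum_congr rfl fun u _ => if_neg (fun hcc => hQ hcc.2)
      _ = if ∀ v ∈ E, y v = x v then p y else 0 := by
          rw [Finset.sum_const_zero, if_neg hQ]

theorem marg_sdiff_sum (p : (∀ v, val v) → ℝ) {E : Finset V} {c : V} (hc : c ∈ E)
    (x : ∀ v, val v) :
    marg p (E \ {c}) x = ∑ u : val c, marg p E (Function.update x c u) := by
  have h1 : E \ {c} = E.erase c := (Finset.erase_eq E c).symm
  rw [h1, marg_insert_sum p (Finset.notMem_erase c E) x, Finset.insert_erase hc]

theorem marg_insert_sdiff_sum (p : (∀ v, val v) → ℝ) {E : Finset V} {b c : V}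
    (hc : c ∈ E) (hbc : c ≠ b) (x : ∀ v, val v) :
    marg p (insert b (E \ {c})) x
      = ∑ u : val c, marg p (insert b E) (Function.update x c u) := by
  have h1 : E \ {c} = E.erase c := (Finset.erase_eq E c).symm
  have h2 : c ∉ insert b (E.erase c) := by
    simp [hbc, Finset.notMem_erase]
  rw [h1, marg_insert_sum p h2 x, Finset.insert_comm, Finset.insert_erase hc]

theorem union_sdiff_singleton' {α : Type*} [DecidableEq α] {E : Finset α} {a : α}
    (ha : a ∈ E) : {a} ∪ (E \ {a}) = E := by
  rw [← Finset.insert_eq, ← Finset.erase_eq, Finset.insert_erase ha]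

theorem union_union_sdiff' {α : Type*} [DecidableEq α] {E : Finset α} {a b : α}
    (ha : a ∈ E) : ({a} ∪ {b}) ∪ (E \ {a}) = insert b E := by
  rw [Finset.union_comm {a} {b}, Finset.union_assoc, union_sdiff_singleton' ha,
    ← Finset.insert_eq]

end MargLemmas

namespace OOSpec

variable (σ : OOSpec)

instance (k : Fin σ.K) : ∀ f : σ.Fd k, Nonempty (σ.fval k f)
  | .inl u => σ.neSVal k u
  | .inr v => σ.neAVal k v

instance (c : σ.CurV) : Nonempty (σ.vval (Sum.inl c)) :=
  inferInstanceAs (Nonempty (σ.fval c.1.1 c.2))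

/-- The equivalence between full configurations and pairs (current, next). -/
def cfgEquiv : σ.Cfg ≃ σ.Cur × σ.Nxt where
  toFun d := (σ.curOf d, σ.nxtOf d)
  invFun pr := σ.mkCfg pr.1 pr.2
  left_inv d := by funext v; cases v <;> rfl
  right_inv pr := rfl

theorem mem_curVars (z : σ.CurV) : (Sum.inl z : σ.Var) ∈ σ.curVars := by
  simp [curVars]

theorem inl_ne_of_fst_ne {o o' : σ.ObjIdx} {f : σ.Fd o.1} {g : σ.Fd o'.1}
    (h : o ≠ o') : (Sum.inl ⟨o, f⟩ : σ.Var) ≠ Sum.inl ⟨o', g⟩ :=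
  fun hc => h (congrArg Sigma.fst (Sum.inl.inj hc))

theorem inl_ne_of_snd_ne {o : σ.ObjIdx} {f g : σ.Fd o.1} (h : f ≠ g) :
    (Sum.inl ⟨o, f⟩ : σ.Var) ≠ Sum.inl ⟨o, g⟩ :=
  fun hc => h (eq_of_heq (Sigma.mk.inj_iff.mp (Sum.inl.inj hc)).2)

theorem forall_curVars_iff (x y : σ.Cfg) :
    (∀ v ∈ σ.curVars, y v = x v) ↔ σ.curOf y = σ.curOf x := by
  constructor
  · intro h; funext o f; exact h _ (σ.mem_curVars ⟨o, f⟩)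
  · intro h v hv
    simp only [curVars, Finset.mem_image, Finset.mem_univ, true_and] at hv
    obtain ⟨z, rfl⟩ := hv
    exact congrFun (congrFun h z.1) z.2

set_option maxHeartbeats 1600000 in
theorem marg_consistent (T : σ.Cur → σ.Nxt → ℝ) (p : σ.Cfg → ℝ)
    (hp : σ.Consistent p T) (i : σ.ObjIdx) (V : σ.SF i.1) (x : σ.Cfg) :
    marg p (insert (Sum.inr ⟨i, V⟩) σ.curVars) x
      = marg p σ.curVars x * σ.coordKer T i V (σ.curOf x) (x (Sum.inr ⟨i, V⟩)) := by
  have hcond : ∀ y : σ.Cfg,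
      (∀ v ∈ insert (Sum.inr ⟨i, V⟩ : σ.Var) σ.curVars, y v = x v)
        ↔ (σ.curOf y = σ.curOf x ∧ y (Sum.inr ⟨i, V⟩) = x (Sum.inr ⟨i, V⟩)) := by
    intro y
    rw [Finset.forall_mem_insert, σ.forall_curVars_iff x y, and_comm]
  have step1 : marg p (insert (Sum.inr ⟨i, V⟩) σ.curVars) x
      = ∑ y : σ.Cfg, if σ.curOf y = σ.curOf x ∧ y (Sum.inr ⟨i, V⟩) = x (Sum.inr ⟨i, V⟩)
          then marg p σ.curVars x * T (σ.curOf x) (σ.nxtOf y) else 0 := by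
    unfold marg
    refine Finset.sum_congr rfl fun y _ => ?_
    by_cases h : σ.curOf y = σ.curOf x ∧ y (Sum.inr ⟨i, V⟩) = x (Sum.inr ⟨i, V⟩)
    · rw [if_pos ((hcond y).mpr h), if_pos h, hp y, h.1]
      congr 1
      exact marg_congr' p _ ((σ.forall_curVars_iff x y).mpr h.1)
    · rw [if_neg (fun hcnd => h ((hcond y).mp hcnd)), if_neg h]
  rw [step1, ← Equiv.sum_comp (σ.cfgEquiv).symm, Fintype.sum_prod_type]
  letI hdec : ∀ x' : σ.Nxt, Decidable (x' i V = x (Sum.inr ⟨i, V⟩)) :=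
    fun x' => σ.deqSVal i.1 V _ _
  have step2 : ∀ (w : σ.Cur) (x' : σ.Nxt),
      (if σ.curOf ((σ.cfgEquiv).symm (w, x')) = σ.curOf x ∧
          ((σ.cfgEquiv).symm (w, x')) (Sum.inr ⟨i, V⟩) = x (Sum.inr ⟨i, V⟩)
        then marg p σ.curVars x * T (σ.curOf x) (σ.nxtOf ((σ.cfgEquiv).symm (w, x'))) else 0)
      = (if w = σ.curOf x
          then (if x' i V = x (Sum.inr ⟨i, V⟩)
            then marg p σ.curVars x * T (σ.curOf x) x' else 0) else 0) := by
    intro w x'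
    rw [← ite_and]
    exact if_congr Iff.rfl rfl rfl
  rw [Finset.sum_congr rfl fun w _ => Finset.sum_congr rfl fun x' (_ : x' ∈ Finset.univ) => step2 w x']
  have step3 : ∀ w : σ.Cur,
      (∑ x' : σ.Nxt, if w = σ.curOf x
          then (if x' i V = x (Sum.inr ⟨i, V⟩)
            then marg p σ.curVars x * T (σ.curOf x) x' else 0) else 0)
        = if w = σ.curOf x
            then (∑ x' : σ.Nxt, if x' i V = x (Sum.inr ⟨i, V⟩)
              then marg p σ.curVars x * T (σ.curOf x) x' else 0) else 0 := by
    intro w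
    split_ifs with h
    · rfl
    · exact Finset.sum_const_zero
  rw [Finset.sum_congr rfl fun w (_ : w ∈ Finset.univ) => step3 w]
  rw [Finset.sum_ite_eq' Finset.univ (σ.curOf x)
    (fun w => ∑ x' : σ.Nxt, if x' i V = x (Sum.inr ⟨i, V⟩)
      then marg p σ.curVars x * T (σ.curOf x) x' else 0)]
  rw [if_pos (Finset.mem_univ _)]
  unfold coordKer
  rw [Finset.mul_sum]
  refine Finset.sum_congr rfl fun x' _ => ?_
  rw [mul_ite, mul_zero]

/-- The conditional kernel of O_i.V' as a function of the full configuration. -/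
def Gfun (T : σ.Cur → σ.Nxt → ℝ) (i : σ.ObjIdx) (V : σ.SF i.1) (x : σ.Cfg) : ℝ :=
  σ.coordKer T i V (σ.curOf x) (x (Sum.inr ⟨i, V⟩))

theorem Gfun_update (T : σ.Cur → σ.Nxt → ℝ) (i : σ.ObjIdx) (V : σ.SF i.1)
    (c : σ.CurV) (x : σ.Cfg) (u : σ.vval (Sum.inl c)) :
    σ.Gfun T i V (Function.update x (Sum.inl c) u)
      = σ.coordKer T i V (σ.curOf (Function.update x (Sum.inl c) u)) (x (Sum.inr ⟨i, V⟩)) := by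
  unfold Gfun
  rw [Function.update_of_ne (by simp)]

/-- The two sides of the conditional-independence equation, for a pmf consistent with `T`. -/
theorem ci_sides (T : σ.Cur → σ.Nxt → ℝ) (r : σ.Cfg → ℝ) (hr : σ.Consistent r T)
    (c : σ.CurV) (i : σ.ObjIdx) (V : σ.SF i.1) (x : σ.Cfg) :
    marg r ({Sum.inl c} ∪ {Sum.inr ⟨i, V⟩} ∪ (σ.curVars \ {Sum.inl c})) x
        * marg r (σ.curVars \ {Sum.inl c}) x
      = (marg r σ.curVars x * σ.Gfun T i V x)
          * (∑ u : σ.vval (Sum.inl c), marg r σ.curVars (Function.update x (Sum.inl c) u))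
    ∧ marg r ({Sum.inl c} ∪ (σ.curVars \ {Sum.inl c})) x
        * marg r ({Sum.inr ⟨i, V⟩} ∪ (σ.curVars \ {Sum.inl c})) x
      = marg r σ.curVars x
          * (∑ u : σ.vval (Sum.inl c),
              marg r σ.curVars (Function.update x (Sum.inl c) u)
                * σ.Gfun T i V (Function.update x (Sum.inl c) u)) := by
  have hc := σ.mem_curVars c
  have hne : (Sum.inl c : σ.Var) ≠ Sum.inr ⟨i, V⟩ := by simp
  constructor
  · rw [union_union_sdiff' hc, σ.marg_consistent T r hr i V x, marg_sdiff_sum r hc x]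
    rfl
  · rw [union_sdiff_singleton' hc, ← Finset.insert_eq,
      marg_insert_sdiff_sum r hc hne x, Finset.mul_sum, Finset.mul_sum]
    refine Finset.sum_congr rfl fun u _ => ?_
    rw [σ.marg_consistent T r hr i V _]
    rfl

theorem condIndep_of_Gfun_const (T : σ.Cur → σ.Nxt → ℝ) (r : σ.Cfg → ℝ)
    (hr : σ.Consistent r T) (c : σ.CurV) (i : σ.ObjIdx) (V : σ.SF i.1)
    (hG : ∀ (x : σ.Cfg) (u : σ.vval (Sum.inl c)),
      σ.Gfun T i V (Function.update x (Sum.inl c) u) = σ.Gfun T i V x) :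
    CondIndep r {Sum.inl c} {Sum.inr ⟨i, V⟩} (σ.curVars \ {Sum.inl c}) := by
  intro x
  obtain ⟨h1, h2⟩ := σ.ci_sides T r hr c i V x
  rw [h1, h2]
  simp_rw [hG x]
  rw [← Finset.sum_mul]
  ring

theorem Gfun_const_of_condIndep (T : σ.Cur → σ.Nxt → ℝ) (p : σ.Cfg → ℝ)
    (hppos : ∀ d, 0 < p d) (hp : σ.Consistent p T) (c : σ.CurV)
    (i : σ.ObjIdx) (V : σ.SF i.1)
    (hci : CondIndep p {Sum.inl c} {Sum.inr ⟨i, V⟩} (σ.curVars \ {Sum.inl c}))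
    (x : σ.Cfg) (u : σ.vval (Sum.inl c)) :
    σ.Gfun T i V (Function.update x (Sum.inl c) u) = σ.Gfun T i V x := by
  have key : ∀ z : σ.Cfg,
      σ.Gfun T i V z
          * (∑ w : σ.vval (Sum.inl c), marg p σ.curVars (Function.update z (Sum.inl c) w))
        = ∑ w : σ.vval (Sum.inl c),
            marg p σ.curVars (Function.update z (Sum.inl c) w)
              * σ.Gfun T i V (Function.update z (Sum.inl c) w) := by
    intro z
    obtain ⟨h1, h2⟩ := σ.ci_sides T p hp c i V z
    have hcix := hci z
    rw [h1, h2] at hcix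
    have hMz : marg p σ.curVars z ≠ 0 := (marg_pos' hppos _ z).ne'
    refine mul_left_cancel₀ hMz ?_
    rw [← hcix]; ring
  have h1 := key (Function.update x (Sum.inl c) u)
  simp only [Function.update_idem] at h1
  have h2 := key x
  have hS : (0:ℝ) < ∑ w : σ.vval (Sum.inl c),
      marg p σ.curVars (Function.update x (Sum.inl c) w) :=
    Finset.sum_pos (fun w _ => marg_pos' hppos _ _) Finset.univ_nonempty
  have hG2 : ∀ u' : σ.vval (Sum.inl c),
      (Function.update x (Sum.inl c) u') (Sum.inr ⟨i, V⟩) = x (Sum.inr ⟨i, V⟩) := by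
    intro u'; rw [Function.update_of_ne (by simp)]
  exact mul_right_cancel₀ hS.ne' (h1.trans h2.symm)

theorem cast_w (w : σ.Cur) {o1 o2 : σ.ObjIdx} (h : o1 = o2)
    (hh : σ.Obj o1.1 = σ.Obj o2.1) : cast hh (w o1) = w o2 := by
  subst h; rfl

theorem swapCur_fst (l : Fin σ.K) (ma mb : Fin (σ.Nk l)) (w : σ.Cur) :
    σ.swapCur ⟨l, ma⟩ ⟨l, mb⟩ rfl w ⟨l, ma⟩ = w ⟨l, mb⟩ := by
  unfold swapCur
  exact σ.cast_w w (Equiv.swap_apply_left _ _) _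

theorem swapCur_snd (l : Fin σ.K) (ma mb : Fin (σ.Nk l)) (w : σ.Cur) :
    σ.swapCur ⟨l, ma⟩ ⟨l, mb⟩ rfl w ⟨l, mb⟩ = w ⟨l, ma⟩ := by
  unfold swapCur
  exact σ.cast_w w (Equiv.swap_apply_right _ _) _

theorem swapCur_other (l : Fin σ.K) (ma mb : Fin (σ.Nk l)) (w : σ.Cur)
    (o : σ.ObjIdx) (h1 : o ≠ ⟨l, ma⟩) (h2 : o ≠ ⟨l, mb⟩) :
    σ.swapCur ⟨l, ma⟩ ⟨l, mb⟩ rfl w o = w o := by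
  unfold swapCur
  exact σ.cast_w w (Equiv.swap_apply_of_ne_of_ne h1 h2) _

theorem coordKer_objLaw (T : σ.Cur → σ.Nxt → ℝ) (i : σ.ObjIdx) (V : σ.SF i.1)
    (w : σ.Cur) (c : σ.SVal i.1 V) :
    σ.coordKer T i V w c
      = ∑ y : (∀ u : σ.SF i.1, σ.SVal i.1 u), if y V = c then σ.objLaw T i w y else 0 := by
  unfold coordKer objLaw
  rw [eq_comm]
  calc ∑ y : (∀ u : σ.SF i.1, σ.SVal i.1 u),
        (if y V = c then ∑ x' : σ.Nxt, if x' i = y then T w x' else 0 else 0)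
      = ∑ y : (∀ u : σ.SF i.1, σ.SVal i.1 u), ∑ x' : σ.Nxt,
          if x' i = y then (if y V = c then T w x' else 0) else 0 := by
        refine Finset.sum_congr rfl fun y _ => ?_
        by_cases h : y V = c
        · simp [h]
        · simp [h]
    _ = ∑ x' : σ.Nxt, ∑ y : (∀ u : σ.SF i.1, σ.SVal i.1 u),
          if x' i = y then (if y V = c then T w x' else 0) else 0 := Finset.sum_comm
    _ = ∑ x' : σ.Nxt, if x' i V = c then T w x' else 0 := by
        refine Finset.sum_congr rfl fun x' _ => ?_
        rw [Finset.sum_ite_eq Finset.univ (x' i)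
          (fun y => if y V = c then T w x' else 0), if_pos (Finset.mem_univ _)]

theorem coordKer_swap (T : σ.Cur → σ.Nxt → ℝ) (hcaus : σ.CausSym T)
    (l : Fin σ.K) (ma mb : Fin (σ.Nk l)) (i : σ.ObjIdx)
    (hai : (⟨l, ma⟩ : σ.ObjIdx) ≠ i) (hbi : (⟨l, mb⟩ : σ.ObjIdx) ≠ i)
    (V : σ.SF i.1) (w : σ.Cur) (c : σ.SVal i.1 V) :
    σ.coordKer T i V (σ.swapCur ⟨l, ma⟩ ⟨l, mb⟩ rfl w) c = σ.coordKer T i V w c := by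
  rw [σ.coordKer_objLaw, σ.coordKer_objLaw]
  exact Finset.sum_congr rfl fun y _ => by rw [← hcaus i l ma mb hai hbi w y]

theorem swap_update_comm (l : Fin σ.K) (ma mb : Fin (σ.Nk l)) (U : σ.Fd l)
    (x : σ.Cfg) (u : σ.vval (Sum.inl ⟨⟨l, mb⟩, U⟩)) :
    σ.swapCur ⟨l, ma⟩ ⟨l, mb⟩ rfl (σ.curOf (Function.update x (Sum.inl ⟨⟨l, mb⟩, U⟩) u))
      = σ.curOf (Function.update
          (σ.mkCfg (σ.swapCur ⟨l, ma⟩ ⟨l, mb⟩ rfl (σ.curOf x)) (σ.nxtOf x))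
          (Sum.inl ⟨⟨l, ma⟩, U⟩) u) := by
  funext o
  rcases eq_or_ne o ⟨l, ma⟩ with rfl | hoa
  · rw [σ.swapCur_fst]
    funext f
    by_cases hf : f = U
    · subst hf
      show Function.update x (Sum.inl ⟨⟨l, mb⟩, f⟩) u (Sum.inl ⟨⟨l, mb⟩, f⟩)
        = Function.update (σ.mkCfg (σ.swapCur ⟨l, ma⟩ ⟨l, mb⟩ rfl (σ.curOf x)) (σ.nxtOf x))
            (Sum.inl ⟨⟨l, ma⟩, f⟩) u (Sum.inl ⟨⟨l, ma⟩, f⟩)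
      rw [Function.update_self]; exact (Function.update_self (Sum.inl ⟨⟨l, ma⟩, f⟩) u (σ.mkCfg (σ.swapCur ⟨l, ma⟩ ⟨l, mb⟩ rfl (σ.curOf x)) (σ.nxtOf x))).symm
    · show Function.update x (Sum.inl ⟨⟨l, mb⟩, U⟩) u (Sum.inl ⟨⟨l, mb⟩, f⟩)
        = Function.update (σ.mkCfg (σ.swapCur ⟨l, ma⟩ ⟨l, mb⟩ rfl (σ.curOf x)) (σ.nxtOf x))
            (Sum.inl ⟨⟨l, ma⟩, U⟩) u (Sum.inl ⟨⟨l, ma⟩, f⟩)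
      rw [Function.update_of_ne (σ.inl_ne_of_snd_ne (o := ⟨l, mb⟩) hf)]
      refine Eq.trans ?_ (Function.update_of_ne (σ.inl_ne_of_snd_ne (o := ⟨l, ma⟩) hf) u (σ.mkCfg (σ.swapCur ⟨l, ma⟩ ⟨l, mb⟩ rfl (σ.curOf x)) (σ.nxtOf x))).symm
      show x (Sum.inl ⟨⟨l, mb⟩, f⟩) = σ.swapCur ⟨l, ma⟩ ⟨l, mb⟩ rfl (σ.curOf x) ⟨l, ma⟩ f
      rw [σ.swapCur_fst]
      rfl
  · rcases eq_or_ne o ⟨l, mb⟩ with rfl | hob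
    · rw [σ.swapCur_snd]
      funext f
      show Function.update x (Sum.inl ⟨⟨l, mb⟩, U⟩) u (Sum.inl ⟨⟨l, ma⟩, f⟩)
        = Function.update (σ.mkCfg (σ.swapCur ⟨l, ma⟩ ⟨l, mb⟩ rfl (σ.curOf x)) (σ.nxtOf x))
            (Sum.inl ⟨⟨l, ma⟩, U⟩) u (Sum.inl ⟨⟨l, mb⟩, f⟩)
      rw [Function.update_of_ne (σ.inl_ne_of_fst_ne (Ne.symm hoa))]
      refine Eq.trans ?_ (Function.update_of_ne (σ.inl_ne_of_fst_ne (o := ⟨l, mb⟩) (o' := ⟨l, ma⟩) (f := f) (g := U) hoa) u (σ.mkCfg (σ.swapCur ⟨l, ma⟩ ⟨l, mb⟩ rfl (σ.curOf x)) (σ.nxtOf x))).symm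
      show x (Sum.inl ⟨⟨l, ma⟩, f⟩) = σ.swapCur ⟨l, ma⟩ ⟨l, mb⟩ rfl (σ.curOf x) ⟨l, mb⟩ f
      rw [σ.swapCur_snd]
      rfl
    · rw [σ.swapCur_other _ _ _ _ _ hoa hob]
      funext f
      show Function.update x (Sum.inl ⟨⟨l, mb⟩, U⟩) u (Sum.inl ⟨o, f⟩)
        = Function.update (σ.mkCfg (σ.swapCur ⟨l, ma⟩ ⟨l, mb⟩ rfl (σ.curOf x)) (σ.nxtOf x))
            (Sum.inl ⟨⟨l, ma⟩, U⟩) u (Sum.inl ⟨o, f⟩)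
      rw [Function.update_of_ne (σ.inl_ne_of_fst_ne hob)]
      refine Eq.trans ?_ (Function.update_of_ne (σ.inl_ne_of_fst_ne (g := U) hoa) u (σ.mkCfg (σ.swapCur ⟨l, ma⟩ ⟨l, mb⟩ rfl (σ.curOf x)) (σ.nxtOf x))).symm
      show x (Sum.inl ⟨o, f⟩) = σ.swapCur ⟨l, ma⟩ ⟨l, mb⟩ rfl (σ.curOf x) o f
      rw [σ.swapCur_other _ _ _ _ _ hoa hob]
      rfl

end OOSpec

open OOSpec in
/-- In an OO-FMDP with independent transitions and causation symmetry, if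
`q` is the joint pmf whose current-step marginal is the σ_{ab}-pushforward of that of `p`
and which is consistent with the same kernel, then for an object `i` distinct from `a` and
`b`, the conditional independence O_a.U ⊥_p O_i.V' | ((S,A) \ {O_a.U}) transfers to
O_b.U ⊥_q O_i.V' | ((S,A) \ {O_b.U}). -/
theorem oo_fmdp_global_ci_transfers_by_causation_symmetry
    (σ : OOSpec) (T : σ.Cur → σ.Nxt → ℝ)
    (hT0 : ∀ w x', 0 ≤ T w x') (hT1 : ∀ w, ∑ x', T w x' = 1)
    (hind : σ.IndepTrans T) (hcaus : σ.CausSym T)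
    (l : Fin σ.K) (ma mb : Fin (σ.Nk l)) (U : σ.Fd l)
    (i : σ.ObjIdx) (V : σ.SF i.1)
    (hai : (⟨l, ma⟩ : σ.ObjIdx) ≠ i) (hbi : (⟨l, mb⟩ : σ.ObjIdx) ≠ i)
    (p q : σ.Cfg → ℝ)
    (hppos : ∀ d, 0 < p d) (hpsum : ∑ d, p d = 1) (hpcons : σ.Consistent p T)
    (hqcons : σ.Consistent q T)
    -- q(current = w) = p(current = σ_{ab}(w))
    (hqmarg : ∀ d : σ.Cfg, marg q σ.curVars d =
      marg p σ.curVars (σ.mkCfg (σ.swapCur ⟨l, ma⟩ ⟨l, mb⟩ rfl (σ.curOf d)) (σ.nxtOf d)))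
    (hci : CondIndep p {Sum.inl ⟨⟨l, ma⟩, U⟩} {Sum.inr ⟨i, V⟩}
      (σ.curVars \ {Sum.inl ⟨⟨l, ma⟩, U⟩})) :
    CondIndep q {Sum.inl ⟨⟨l, mb⟩, U⟩} {Sum.inr ⟨i, V⟩}
      (σ.curVars \ {Sum.inl ⟨⟨l, mb⟩, U⟩}) := by
  refine σ.condIndep_of_Gfun_const T q hqcons ⟨⟨l, mb⟩, U⟩ i V ?_
  intro x u
  have hconst := σ.Gfun_const_of_condIndep T p hppos hpcons ⟨⟨l, ma⟩, U⟩ i V hci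
  rw [σ.Gfun_update T i V ⟨⟨l, mb⟩, U⟩ x u,
    ← σ.coordKer_swap T hcaus l ma mb i hai hbi V
      (σ.curOf (Function.update x (Sum.inl ⟨⟨l, mb⟩, U⟩) u)) (x (Sum.inr ⟨i, V⟩)),
    σ.swap_update_comm l ma mb U x u]
  have e2 : σ.coordKer T i V
      (σ.curOf (Function.update
        (σ.mkCfg (σ.swapCur ⟨l, ma⟩ ⟨l, mb⟩ rfl (σ.curOf x)) (σ.nxtOf x))
        (Sum.inl ⟨⟨l, ma⟩, U⟩) u)) (x (Sum.inr ⟨i, V⟩))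
      = σ.Gfun T i V (Function.update
          (σ.mkCfg (σ.swapCur ⟨l, ma⟩ ⟨l, mb⟩ rfl (σ.curOf x)) (σ.nxtOf x))
          (Sum.inl ⟨⟨l, ma⟩, U⟩) u) := by
    exact (σ.Gfun_update T i V ⟨⟨l, ma⟩, U⟩ _ u).symm
  rw [e2, hconst _ u]
  exact σ.coordKer_swap T hcaus l ma mb i hai hbi V (σ.curOf x) (x (Sum.inr ⟨i, V⟩))
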